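/- Let (b,d) ∈ P, i.e. 0 < b < d, and define L(b,d) := (b³ + 2b²d + bd² + b² + 4bd + 2d²)/(b²d + 3bd² + b² + 4bd + 2d²). Then F(x,−1,b,d) < 0 for every x with L(b,d) < x ≤ 1. -/

import Mathlib

noncomputable def F (x y b d : ℝ) : ℝ :=
  -b*d*x^2 + (b*d^2*y - b*(b+d) - d*(b+1)*(b+2*d))*x + b*d*(b+d)*y + (b+1)*(b+d)*(b+2*d)

set_option maxHeartbeats 2000000 in
/-- For `(b,d) ∈ P`, `F(x,-1,b,d) < 0` on the interval `(L(b,d), 1]`. -/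
theorem F_neg_on_interval (b d : ℝ) (hb : 0 < b) (hbd : b < d) :
    ∀ x : ℝ,
      (b^3 + 2*b^2*d + b*d^2 + b^2 + 4*b*d + 2*d^2) /
        (b^2*d + 3*b*d^2 + b^2 + 4*b*d + 2*d^2) < x → x ≤ 1 →
      F x (-1) b d < 0 := by
  intro x hL hx1
  have hd : 0 < d := hb.trans hbd
  set D : ℝ := b^2*d + 3*b*d^2 + b^2 + 4*b*d + 2*d^2 with hDdef
  set N : ℝ := b^3 + 2*b^2*d + b*d^2 + b^2 + 4*b*d + 2*d^2 with hNdef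
  have hD : 0 < D := by positivity
  have hN : 0 < N := by positivity
  have hND : N < x * D := (div_lt_iff₀ hD).mp hL
  have hxD : 0 < x * D := hN.trans hND
  have hkey : F x (-1) b d * D^2 =
      -(b^3*d*(d-b)*(4*d^3 - 3*b^2*d - b^3))
      - (x*D - N) * (b*d*(x*D + N) + (b*d^2 + b*(b+d) + d*(b+1)*(b+2*d))*D) := by
    simp only [F, hDdef, hNdef]; ring
  have hb2d : b^2*d < d^3 := by nlinarith [mul_pos (mul_pos hd (sub_pos.mpr hbd)) (show (0:ℝ) < d + b by linarith)]
  have hb3 : b^3 < d^3 := by nlinarith [mul_pos (sub_pos.mpr hbd) (show (0:ℝ) < d^2 + b*d + b^2 by positivity)]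
  have h1 : 0 < b^3*d*(d-b)*(4*d^3 - 3*b^2*d - b^3) := by
    apply mul_pos (mul_pos (by positivity) (by linarith))
    nlinarith
  have h2 : 0 < (x*D - N) * (b*d*(x*D + N) + (b*d^2 + b*(b+d) + d*(b+1)*(b+2*d))*D) := by
    apply mul_pos (by linarith)
    have : 0 < b*d*(x*D + N) := by positivity
    nlinarith [mul_pos hb hd, mul_pos hD (mul_pos hb hd)]
  have : F x (-1) b d * D^2 < 0 := by rw [hkey]; linarith
  nlinarith [sq_nonneg D, pow_pos hD 2]
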